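/- Let B(Ω) be a strong Bergman-type space and let u ∈ BUC(Ω,d). For any sequence {z_n} in Ω, the sequence of Toeplitz operators T_{u∘φ_{z_n}} has a subnet that converges in the strong operator topology of bounded operators on B(Ω). -/

import Mathlib

open MeasureTheory Filter Topology Set ENNReal

noncomputable section

/-- The ambient space `ℂⁿ`. -/
abbrev Cn (n : ℕ) := Fin n → ℂ

/-- A Bergman-type space on a domain `Ω ⊆ ℂⁿ`, following Mitkovski--Wick.
The data consists of the domain `Ω`, the involutions `φ_z` (axiom A.1), the
quasi-invariant metric `d` (axiom A.2), the finite measure `σ` together with the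
reproducing kernel `K` of the space of holomorphic functions in `L²(σ)` (axiom A.3),
the measure `λ = ‖K_z‖² dσ` (axiom A.4), the kernel quasi-identity (axiom A.5),
the Rudin--Forelli estimates with constant `κ` (axiom A.6), and the blow-up of
`‖K_z‖` at infinity (axiom A.7). -/
structure BergmanTypeSpace (n : ℕ) where
  Ω : Set (Cn n)
  isOpen_domain : IsOpen Ω
  isConnected_domain : IsConnected Ω
  zero_mem : (0 : Cn n) ∈ Ω
  /- A.1 : involutive holomorphic automorphisms with `φ z 0 = z`. -/
  φ : Cn n → Cn n → Cn n
  φ_mapsTo : ∀ z ∈ Ω, Set.MapsTo (φ z) Ω Ω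
  φ_holo : ∀ z ∈ Ω, DifferentiableOn ℂ (φ z) Ω
  φ_invol : ∀ z ∈ Ω, ∀ w ∈ Ω, φ z (φ z w) = w
  φ_zero : ∀ z ∈ Ω, φ z 0 = z
  /- A.2 : a quasi-invariant metric on `Ω`, separable and finitely compact. -/
  d : Cn n → Cn n → ℝ
  d_nonneg : ∀ z ∈ Ω, ∀ w ∈ Ω, 0 ≤ d z w
  d_eq_zero_iff : ∀ z ∈ Ω, ∀ w ∈ Ω, (d z w = 0 ↔ z = w)
  d_symm : ∀ z ∈ Ω, ∀ w ∈ Ω, d z w = d w z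
  d_triangle : ∀ u ∈ Ω, ∀ v ∈ Ω, ∀ w ∈ Ω, d u w ≤ d u v + d v w
  Cd : ℝ
  one_le_Cd : 1 ≤ Cd
  d_quasiInvariant : ∀ z ∈ Ω, ∀ u ∈ Ω, ∀ v ∈ Ω,
    d (φ z u) (φ z v) ≤ Cd * d u v ∧ d u v ≤ Cd * d (φ z u) (φ z v)
  d_separable : ∃ s : Set (Cn n), s.Countable ∧ s ⊆ Ω ∧
    ∀ z ∈ Ω, ∀ ε : ℝ, 0 < ε → ∃ w ∈ s, d z w < ε
  d_finitelyCompact : ∀ z ∈ Ω, ∀ r : ℝ, ∀ f : ℕ → Cn n,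
    (∀ m, f m ∈ Ω ∧ d z (f m) ≤ r) →
    ∃ w, (w ∈ Ω ∧ d z w ≤ r) ∧ ∃ g : ℕ → ℕ, StrictMono g ∧
      Filter.Tendsto (fun m => d w (f (g m))) Filter.atTop (nhds 0)
  /- A.3 : a finite measure carried by `Ω` for which the holomorphic functions in
  `L²(σ)` form a reproducing kernel Hilbert space with kernel `K`. -/
  σ : Measure (Cn n)
  σ_finite : IsFiniteMeasure σ
  σ_carried : σ Ωᶜ = 0
  K : Cn n → Cn n → ℂ
  K_holo : ∀ z ∈ Ω, DifferentiableOn ℂ (K z) Ω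
  K_memL2 : ∀ z ∈ Ω, MemLp (K z) 2 σ
  K_reproducing : ∀ f : Cn n → ℂ, DifferentiableOn ℂ f Ω → MemLp f 2 σ → ∀ z ∈ Ω,
    f z = ∫ w, f w * (starRingEnd ℂ) (K z w) ∂σ
  Knorm : Cn n → ℝ
  Knorm_def : ∀ z, Knorm z = Real.sqrt (∫ w, ‖K z w‖ ^ 2 ∂σ)
  Knorm_pos : ∀ z ∈ Ω, 0 < Knorm z
  Knorm_continuous : ∀ z ∈ Ω, ∀ ε : ℝ, 0 < ε → ∃ δ : ℝ, 0 < δ ∧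
    ∀ w ∈ Ω, d z w < δ → |Knorm w - Knorm z| < ε
  k : Cn n → Cn n → ℂ
  k_def : ∀ z w, k z w = K z w / (Knorm z : ℂ)
  /- A.4 : the measure `λ = ‖K_z‖² dσ` is quasi-invariant and doubling. -/
  lam : Measure (Cn n)
  lam_def : lam = σ.withDensity (fun z => ENNReal.ofReal (Knorm z ^ 2))
  Clam : ℝ≥0∞
  Clam_lt_top : Clam < ⊤
  lam_quasiInvariant : ∀ z ∈ Ω, ∀ E : Set (Cn n), MeasurableSet E → E ⊆ Ω →
    lam E ≤ Clam * lam (Ω ∩ φ z ⁻¹' E) ∧ lam (Ω ∩ φ z ⁻¹' E) ≤ Clam * lam E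
  Cdbl : ℝ≥0∞
  Cdbl_lt_top : Cdbl < ⊤
  lam_doubling : ∀ z ∈ Ω, ∀ r : ℝ, 0 < r →
    lam {w ∈ Ω | d z w < 2 * r} ≤ Cdbl * lam {w ∈ Ω | d z w < r}
  /- A.5 : `|⟨k_z, k_w⟩| ≃ 1 / ‖K_{φ_z(w)}‖`. -/
  C5 : ℝ
  one_le_C5 : 1 ≤ C5
  kernel_quasi : ∀ z ∈ Ω, ∀ w ∈ Ω,
    ‖∫ u, k z u * (starRingEnd ℂ) (k w u) ∂σ‖ ≤ C5 * (1 / Knorm (φ z w)) ∧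
    1 / Knorm (φ z w) ≤ C5 * ‖∫ u, k z u * (starRingEnd ℂ) (k w u) ∂σ‖
  /- A.6 : the Rudin--Forelli estimates, with constant `0 ≤ κ < 2`. -/
  κ : ℝ
  κ_nonneg : 0 ≤ κ
  κ_lt_two : κ < 2
  rudinForelli :
    (κ = 0 ∧ ∀ r : ℝ, 0 < r → ∃ C : ℝ≥0∞, C < ⊤ ∧ ∀ z ∈ Ω,
      (∫⁻ w, (‖∫ u, K z u * (starRingEnd ℂ) (K w u) ∂σ‖₊ : ℝ≥0∞) ^ r /
        ((ENNReal.ofReal (Knorm z)) ^ r * (ENNReal.ofReal (Knorm w)) ^ r) ∂lam) ≤ C) ∨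
    (0 < κ ∧ ∀ r s : ℝ, κ < r → 0 < s → s < κ → ∃ C : ℝ≥0∞, C < ⊤ ∧ ∀ z ∈ Ω,
      (∫⁻ w, (‖∫ u, K z u * (starRingEnd ℂ) (K w u) ∂σ‖₊ : ℝ≥0∞) ^ ((r + s) / 2) /
        ((ENNReal.ofReal (Knorm z)) ^ s * (ENNReal.ofReal (Knorm w)) ^ r) ∂lam) ≤ C)
  /- A.7 : `‖K_z‖ → ∞` as `d(z,0) → ∞`. -/
  Knorm_atInfty : ∀ M : ℝ, ∃ R : ℝ, ∀ z ∈ Ω, R < d z 0 → M < Knorm z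

namespace BergmanTypeSpace

variable {n : ℕ}

/-- Membership in the Bergman-type space `B(Ω)`: holomorphic on `Ω` and in `L²(σ)`. -/
def memB (S : BergmanTypeSpace n) (f : Cn n → ℂ) : Prop :=
  DifferentiableOn ℂ f S.Ω ∧ MemLp f 2 S.σ

/-- The `L²(Ω; dσ)` inner product. -/
def inn (S : BergmanTypeSpace n) (f g : Cn n → ℂ) : ℂ :=
  ∫ w, f w * (starRingEnd ℂ) (g w) ∂S.σ

/-- The `L²(Ω; dσ)` norm. -/
def nrm (S : BergmanTypeSpace n) (f : Cn n → ℂ) : ℝ :=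
  Real.sqrt (∫ w, ‖f w‖ ^ 2 ∂S.σ)

/-- The orthogonal projection `P f(z) = ∫ ⟨K_w, K_z⟩ f(w) dσ(w)`. -/
def P (S : BergmanTypeSpace n) (f : Cn n → ℂ) : Cn n → ℂ :=
  fun z => ∫ w, (S.inn (S.K w) (S.K z)) * f w ∂S.σ

/-- The Toeplitz operator `T_u = P M_u`. -/
def toeplitz (S : BergmanTypeSpace n) (u : Cn n → ℂ) (f : Cn n → ℂ) : Cn n → ℂ :=
  S.P (fun w => u w * f w)

/-- The Hankel operator `H_u = (I - P) M_u`. -/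
def hankel (S : BergmanTypeSpace n) (u : Cn n → ℂ) (f : Cn n → ℂ) : Cn n → ℂ :=
  fun w => u w * f w - S.P (fun x => u x * f x) w

/-- The adapted translation `U_z f(w) = f(φ_z(w)) k_z(w)`. -/
def U (S : BergmanTypeSpace n) (z : Cn n) (f : Cn n → ℂ) : Cn n → ℂ :=
  fun w => f (S.φ z w) * S.k z w

/-- The filter of points of `Ω` with `d(z,0) → ∞`. -/
def toInfty (S : BergmanTypeSpace n) : Filter (Cn n) :=
  (Filter.atTop.comap (fun z => S.d z 0)) ⊓ Filter.principal S.Ω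

/-- `Tad` is an adjoint of `T` as an operator on `B(Ω)`. -/
def IsAdjointPair (S : BergmanTypeSpace n) (T Tad : (Cn n → ℂ) → (Cn n → ℂ)) : Prop :=
  Set.MapsTo Tad {f | S.memB f} {f | S.memB f} ∧
  ∀ f g, S.memB f → S.memB g → S.inn (T f) g = S.inn f (Tad g)

/-- Compactness of an operator on `B(Ω)`: the image of any sequence in the unit ball
has a Cauchy (in `L²(σ)`) subsequence. -/
def IsCompactOp (S : BergmanTypeSpace n) (T : (Cn n → ℂ) → (Cn n → ℂ)) : Prop :=
  Set.MapsTo T {f | S.memB f} {f | S.memB f} ∧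
  ∀ f : ℕ → (Cn n → ℂ), (∀ m, S.memB (f m) ∧ S.nrm (f m) ≤ 1) →
    ∃ g : ℕ → ℕ, StrictMono g ∧ ∀ ε : ℝ, 0 < ε → ∃ N : ℕ, ∀ p ≥ N, ∀ q ≥ N,
      S.nrm (fun w => T (f (g p)) w - T (f (g q)) w) < ε

/-- The operator norm (of an operator defined on `B(Ω)`, with values in `L²(σ)`). -/
def opNorm (S : BergmanTypeSpace n) (T : (Cn n → ℂ) → (Cn n → ℂ)) : ℝ :=
  sInf {C : ℝ | 0 ≤ C ∧ ∀ f, S.memB f → S.nrm (T f) ≤ C * S.nrm f}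

/-- The essential norm `‖T‖ₑ = inf {‖T - A‖ : A compact}`. -/
def essNorm (S : BergmanTypeSpace n) (T : (Cn n → ℂ) → (Cn n → ℂ)) : ℝ :=
  sInf {c : ℝ | ∃ A, S.IsCompactOp A ∧ c = S.opNorm (fun f => fun w => T f w - A f w)}

/-- A strong Bergman-type space: equalities in axioms A.2, A.4 and A.5. -/
def IsStrong (S : BergmanTypeSpace n) : Prop :=
  (∀ z ∈ S.Ω, ∀ u ∈ S.Ω, ∀ v ∈ S.Ω, S.d (S.φ z u) (S.φ z v) = S.d u v) ∧
  (∀ z ∈ S.Ω, ∀ E : Set (Cn n), MeasurableSet E → E ⊆ S.Ω →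
    S.lam (S.Ω ∩ S.φ z ⁻¹' E) = S.lam E) ∧
  (∀ z ∈ S.Ω, ∀ w ∈ S.Ω, ‖S.inn (S.k z) (S.k w)‖ = 1 / S.Knorm (S.φ z w))

/-- A product `T_{u₁} T_{u₂} ⋯ T_{uₖ}` of Toeplitz operators. -/
def toeplitzProd (S : BergmanTypeSpace n) : List (Cn n → ℂ) → ((Cn n → ℂ) → (Cn n → ℂ))
  | [] => id
  | u :: us => fun f => S.toeplitz u (S.toeplitzProd us f)

/-- Symbols in `L∞(Ω)` (bounded measurable on `Ω`). -/
def IsBoundedSymbol (S : BergmanTypeSpace n) (u : Cn n → ℂ) : Prop :=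
  Measurable u ∧ ∃ M : ℝ, ∀ w ∈ S.Ω, ‖u w‖ ≤ M

/-- Symbols in `BUC(Ω,d)`: bounded and `d`-uniformly continuous on `Ω`. -/
def IsBUCSymbol (S : BergmanTypeSpace n) (u : Cn n → ℂ) : Prop :=
  S.IsBoundedSymbol u ∧
  ∀ ε : ℝ, 0 < ε → ∃ δ : ℝ, 0 < δ ∧ ∀ z ∈ S.Ω, ∀ w ∈ S.Ω, S.d z w < δ → ‖u z - u w‖ < ε

/-- A finite sum of finite products of Toeplitz operators whose symbols all satisfy `Q`. -/
def IsToeplitzPolynomial (S : BergmanTypeSpace n) (Q : (Cn n → ℂ) → Prop)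
    (A : (Cn n → ℂ) → (Cn n → ℂ)) : Prop :=
  ∃ (L : ℕ) (us : Fin L → List (Cn n → ℂ)),
    (∀ l, ∀ u ∈ us l, Q u) ∧ ∀ f x, A f x = ∑ l, S.toeplitzProd (us l) f x

/-- Membership in the norm closure of the finite sums of finite products of Toeplitz
operators with symbols satisfying `Q` (e.g. the Toeplitz algebra `𝒯_{L^∞}`). -/
def InToeplitzAlgebra (S : BergmanTypeSpace n) (Q : (Cn n → ℂ) → Prop)
    (T : (Cn n → ℂ) → (Cn n → ℂ)) : Prop :=
  Set.MapsTo T {f | S.memB f} {f | S.memB f} ∧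
  ∀ ε : ℝ, 0 < ε → ∃ A, S.IsToeplitzPolynomial Q A ∧
    ∀ f, S.memB f → S.nrm (fun x => T f x - A f x) ≤ ε * S.nrm f

end BergmanTypeSpace

section AuxGeneral

open Metric in
/-- Cauchy estimate for the Fréchet derivative of a holomorphic function on ℂⁿ. -/
lemma aux_fderiv_bound {n : ℕ} {ψ : Cn n → ℂ} {s : Set (Cn n)} (hs : IsOpen s)
    (hψ : DifferentiableOn ℂ ψ s) {x : Cn n} {r B : ℝ} (hr : 0 < r)
    (hball : Metric.closedBall x r ⊆ s)
    (hB : ∀ y ∈ Metric.closedBall x r, ‖ψ y‖ ≤ B) :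
    ‖fderiv ℂ ψ x‖ ≤ B / r := by
  have hxs : x ∈ s := hball (Metric.mem_closedBall_self hr.le)
  have hdx : DifferentiableAt ℂ ψ x := (hψ x hxs).differentiableAt (hs.mem_nhds hxs)
  have hB0 : 0 ≤ B := le_trans (norm_nonneg _) (hB x (Metric.mem_closedBall_self hr.le))
  refine ContinuousLinearMap.opNorm_le_bound _ (div_nonneg hB0 hr.le) ?_
  intro v
  rcases eq_or_ne v 0 with rfl | hv
  · simp
  have hvn : 0 < ‖v‖ := norm_pos_iff.mpr hv
  set ρ : ℝ := r / ‖v‖ with hρdef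
  have hρ : 0 < ρ := div_pos hr hvn
  set g : ℂ → ℂ := fun ζ => ψ (x + ζ • v) with hgdef
  have hmaps : ∀ ζ : ℂ, ζ ∈ Metric.closedBall (0:ℂ) ρ → x + ζ • v ∈ Metric.closedBall x r := by
    intro ζ hζ
    have : ‖ζ • v‖ ≤ r := by
      rw [norm_smul]
      calc ‖ζ‖ * ‖v‖ ≤ ρ * ‖v‖ := by
            apply mul_le_mul_of_nonneg_right _ hvn.le
            simpa [Complex.dist_eq] using Metric.mem_closedBall.mp hζ
        _ = r := by rw [hρdef, div_mul_cancel₀ r hvn.ne']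
    simpa [Metric.mem_closedBall, dist_eq_norm, add_sub_cancel_left] using this
  have hgd : DifferentiableOn ℂ g (Metric.closedBall (0:ℂ) ρ) := by
    apply DifferentiableOn.comp (t := s) hψ
    · intro ζ hζ
      exact (differentiableWithinAt_id.smul_const v).const_add x
    · intro ζ hζ
      exact hball (hmaps ζ hζ)
  have hgc : DiffContOnCl ℂ g (Metric.ball (0:ℂ) ρ) := by
    apply DifferentiableOn.diffContOnCl
    rwa [closure_ball (0:ℂ) hρ.ne']
  have hL : HasDerivAt g (fderiv ℂ ψ x v) 0 := by
    have h1 : HasDerivAt (fun ζ : ℂ => x + ζ • v) v 0 := by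
      simpa using ((hasDerivAt_id (0:ℂ)).smul_const v).const_add x
    have h2 : HasFDerivAt ψ (fderiv ℂ ψ x) (x + (0:ℂ) • v) := by
      simpa using hdx.hasFDerivAt
    exact h2.comp_hasDerivAt (0:ℂ) h1
  have hbd : ∀ ζ ∈ Metric.sphere (0:ℂ) ρ, ‖g ζ‖ ≤ B := by
    intro ζ hζ
    exact hB _ (hmaps ζ (Metric.sphere_subset_closedBall hζ))
  have := Complex.norm_deriv_le_of_forall_mem_sphere_norm_le hρ hgc hbd
  rw [hL.deriv] at this
  calc ‖fderiv ℂ ψ x v‖ ≤ B / ρ := this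
    _ = B / r * ‖v‖ := by rw [hρdef, div_div_eq_mul_div, div_mul_eq_mul_div]

/-- A function approximated, locally uniformly with vanishing error, by holomorphic
functions is holomorphic. -/
lemma aux_diffOn_of_approx {n : ℕ} {F : Cn n → ℂ} {Ω : Set (Cn n)} (hΩ : IsOpen Ω)
    (ψ : ℕ → Cn n → ℂ) (hψ : ∀ m, DifferentiableOn ℂ (ψ m) Ω)
    (happrox : ∀ x₀ ∈ Ω, ∃ r > 0, Metric.closedBall x₀ r ⊆ Ω ∧ ∃ η : ℕ → ℝ,
      Tendsto η atTop (𝓝 0) ∧ ∀ m, ∀ y ∈ Metric.closedBall x₀ r, ‖F y - ψ m y‖ ≤ η m) :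
    DifferentiableOn ℂ F Ω := by
  intro x₀ hx₀
  obtain ⟨r, hr, hball, η, hη, happ⟩ := happrox x₀ hx₀
  set s : Set (Cn n) := Metric.ball x₀ (r/2) with hsdef
  have hsub : ∀ y ∈ s, Metric.closedBall y (r/2) ⊆ Metric.closedBall x₀ r := by
    intro y hy w hw
    have h1 : dist w y ≤ r/2 := Metric.mem_closedBall.mp hw
    have h2 : dist y x₀ ≤ r/2 := le_of_lt (Metric.mem_ball.mp hy)
    have := dist_triangle w y x₀
    exact Metric.mem_closedBall.mpr (by linarith)
  have hdiffbd : ∀ m l : ℕ, ∀ y ∈ s,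
      ‖fderiv ℂ (ψ m) y - fderiv ℂ (ψ l) y‖ ≤ (η m + η l) / (r/2) := by
    intro m l y hy
    have hds : DifferentiableOn ℂ (fun w => ψ m w - ψ l w) Ω := (hψ m).sub (hψ l)
    have hbd : ∀ w ∈ Metric.closedBall y (r/2), ‖ψ m w - ψ l w‖ ≤ η m + η l := by
      intro w hw
      have hw' := hsub y hy hw
      calc ‖ψ m w - ψ l w‖ = ‖(F w - ψ l w) - (F w - ψ m w)‖ := by ring_nf
        _ ≤ ‖F w - ψ l w‖ + ‖F w - ψ m w‖ := norm_sub_le _ _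
        _ ≤ η m + η l := by
            have := happ l w hw'; have := happ m w hw'; linarith
    have hyΩ : Metric.closedBall y (r/2) ⊆ Ω := (hsub y hy).trans hball
    have := aux_fderiv_bound hΩ hds (by positivity) hyΩ hbd
    have hyΩ' : y ∈ Ω := hyΩ (Metric.mem_closedBall_self (by positivity))
    have hdm : DifferentiableAt ℂ (ψ m) y := ((hψ m) y hyΩ').differentiableAt (hΩ.mem_nhds hyΩ')
    have hdl : DifferentiableAt ℂ (ψ l) y := ((hψ l) y hyΩ').differentiableAt (hΩ.mem_nhds hyΩ')
    rwa [fderiv_fun_sub hdm hdl] at this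
  have hucs : UniformCauchySeqOn (fun m y => fderiv ℂ (ψ m) y) atTop s := by
    rw [Metric.uniformCauchySeqOn_iff]
    intro ε hε
    have hev : ∀ᶠ m in atTop, η m < ε * (r/2) / 4 := by
      have hε' : 0 < ε * (r/2) / 4 := by positivity
      exact (hη.eventually (gt_mem_nhds hε'))
    obtain ⟨N, hN⟩ := hev.exists_forall_of_atTop
    refine ⟨N, fun m hm l hl y hy => ?_⟩
    rw [dist_eq_norm]
    calc ‖fderiv ℂ (ψ m) y - fderiv ℂ (ψ l) y‖ ≤ (η m + η l) / (r/2) := hdiffbd m l y hy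
      _ < ε := by
          rw [div_lt_iff₀ (by positivity)]
          have h1 := hN m hm
          have h2 := hN l hl
          nlinarith [hε, hr]
  have hsopen : IsOpen s := Metric.isOpen_ball
  have hsΩ : s ⊆ Ω := fun y hy => hball (Metric.ball_subset_closedBall.trans
    (Metric.closedBall_subset_closedBall (by linarith)) hy)
  have hcauchy : ∀ y, y ∈ s → ∃ L, Tendsto (fun m => fderiv ℂ (ψ m) y) atTop (𝓝 L) := by
    intro y hy
    have hcs : CauchySeq (fun m => fderiv ℂ (ψ m) y) := by
      rw [Metric.cauchySeq_iff]
      intro ε hε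
      obtain ⟨N, hN⟩ := Metric.uniformCauchySeqOn_iff.mp hucs ε hε
      exact ⟨N, fun m hm l hl => hN m hm l hl y hy⟩
    exact cauchySeq_tendsto_of_complete hcs
  classical
  set g' : Cn n → (Cn n →L[ℂ] ℂ) := fun y =>
    if h : ∃ L, Tendsto (fun m => fderiv ℂ (ψ m) y) atTop (𝓝 L) then h.choose else 0 with hg'def
  have hg' : ∀ y ∈ s, Tendsto (fun m => fderiv ℂ (ψ m) y) atTop (𝓝 (g' y)) := by
    intro y hy
    have h := hcauchy y hy
    simp only [hg'def, dif_pos h]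
    exact h.choose_spec
  have hunif : TendstoUniformlyOn (fun m y => fderiv ℂ (ψ m) y) g' atTop s :=
    hucs.tendstoUniformlyOn_of_tendsto hg'
  have hptF : ∀ y : Cn n, y ∈ s → Tendsto (fun m => ψ m y) atTop (𝓝 (F y)) := by
    intro y hy
    rw [tendsto_iff_dist_tendsto_zero]
    apply squeeze_zero (fun m => dist_nonneg) (fun m => ?_) hη
    rw [dist_eq_norm, ← norm_neg]
    simpa using happ m y (hsub y hy (Metric.mem_closedBall_self (by positivity)))
  have hfd : ∀ m : ℕ, ∀ y : Cn n, y ∈ s → HasFDerivAt (ψ m) (fderiv ℂ (ψ m) y) y := by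
    intro m y hy
    exact (((hψ m) y (hsΩ hy)).differentiableAt (hΩ.mem_nhds (hsΩ hy))).hasFDerivAt
  have hmem : x₀ ∈ s := Metric.mem_ball_self (by positivity)
  have hmain : HasFDerivAt F (g' x₀) x₀ :=
    hasFDerivAt_of_tendstoUniformlyOn hsopen hunif hfd hptF hmem
  exact hmain.differentiableAt.differentiableWithinAt

lemma aux_lintegral_sq {α : Type*} [MeasurableSpace α] (μ : Measure α) (f : α → ℂ)
    (hf : AEStronglyMeasurable f μ) :
    ∫ w, ‖f w‖^2 ∂μ = (∫⁻ w, (‖f w‖₊ : ℝ≥0∞)^2 ∂μ).toReal := by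
  rw [integral_eq_lintegral_of_nonneg_ae (Filter.Eventually.of_forall (fun w => by positivity))
    ((hf.norm.aemeasurable.pow_const 2).aestronglyMeasurable)]
  congr 1
  apply lintegral_congr
  intro w
  rw [ENNReal.ofReal_pow (norm_nonneg _), ofReal_norm, enorm_eq_nnnorm]

lemma aux_eLpNorm_two {α : Type*} [MeasurableSpace α] (μ : Measure α) (f : α → ℂ) :
    eLpNorm f 2 μ = (∫⁻ w, (‖f w‖₊ : ℝ≥0∞)^2 ∂μ) ^ (1/2 : ℝ) := by
  rw [eLpNorm_eq_lintegral_rpow_enorm_toReal two_ne_zero ENNReal.ofNat_ne_top]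
  norm_num
  rfl

lemma aux_toReal_eLpNorm_two {α : Type*} [MeasurableSpace α] (μ : Measure α) (f : α → ℂ)
    (hf : MemLp f 2 μ) :
    (eLpNorm f 2 μ).toReal = Real.sqrt (∫ w, ‖f w‖^2 ∂μ) := by
  rw [aux_lintegral_sq μ f hf.1, aux_eLpNorm_two,
    Real.sqrt_eq_rpow, ← ENNReal.toReal_rpow]

end AuxGeneral

namespace BergmanTypeSpace

variable {n : ℕ} (S : BergmanTypeSpace n)

lemma ae_mem_Ω : ∀ᵐ w ∂S.σ, w ∈ S.Ω := by
  rw [MeasureTheory.ae_iff]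
  exact measure_mono_null (fun x hx => hx) S.σ_carried

lemma inn_conj_symm (f g : Cn n → ℂ) : S.inn f g = (starRingEnd ℂ) (S.inn g f) := by
  unfold inn
  rw [← integral_conj]
  apply integral_congr_ae
  filter_upwards with w
  simp [mul_comm]

lemma krepro {z x : Cn n} (hz : z ∈ S.Ω) (hx : x ∈ S.Ω) :
    S.inn (S.K z) (S.K x) = S.K z x :=
  (S.K_reproducing (S.K z) (S.K_holo z hz) (S.K_memL2 z hz) x hx).symm

lemma kconj {z x : Cn n} (hz : z ∈ S.Ω) (hx : x ∈ S.Ω) :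
    S.K z x = (starRingEnd ℂ) (S.K x z) := by
  rw [← S.krepro hz hx, S.inn_conj_symm, S.krepro hx hz]

lemma int_norm_sq {z : Cn n} (hz : z ∈ S.Ω) :
    ∫ w, ‖S.K z w‖^2 ∂S.σ = S.Knorm z ^ 2 := by
  have h0 : 0 ≤ ∫ w, ‖S.K z w‖^2 ∂S.σ := integral_nonneg (fun w => by positivity)
  rw [S.Knorm_def z, Real.sq_sqrt h0]

lemma kzz {x : Cn n} (hx : x ∈ S.Ω) : S.K x x = ((S.Knorm x ^ 2 : ℝ) : ℂ) := by
  rw [← S.krepro hx hx]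
  unfold inn
  calc ∫ w, S.K x w * (starRingEnd ℂ) (S.K x w) ∂S.σ
      = ∫ w, ((‖S.K x w‖^2 : ℝ) : ℂ) ∂S.σ := by
        apply integral_congr_ae
        filter_upwards with w
        rw [Complex.mul_conj]
        norm_cast
        rw [Complex.normSq_eq_norm_sq]
    _ = ((∫ w, ‖S.K x w‖^2 ∂S.σ : ℝ) : ℂ) := integral_ofReal
    _ = _ := by rw [S.int_norm_sq hx]

lemma nrm_eq_norm_toLp {f : Cn n → ℂ} (hf : MemLp f 2 S.σ) :
    S.nrm f = ‖hf.toLp f‖ := by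
  rw [Lp.norm_toLp, aux_toReal_eLpNorm_two _ _ hf]
  rfl

lemma norm_toLp_K {x : Cn n} (hx : x ∈ S.Ω) :
    ‖(S.K_memL2 x hx).toLp (S.K x)‖ = S.Knorm x := by
  rw [← S.nrm_eq_norm_toLp (S.K_memL2 x hx)]
  unfold nrm
  rw [← S.Knorm_def]

lemma a5eq (hS : S.IsStrong) {z w : Cn n} (hz : z ∈ S.Ω) (hw : w ∈ S.Ω) :
    S.Knorm (S.φ z w) * ‖S.K z w‖ = S.Knorm z * S.Knorm w := by
  have h := hS.2.2 z hz w hw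
  have hkk : S.inn (S.k z) (S.k w)
      = S.inn (S.K z) (S.K w) / ((S.Knorm z : ℂ) * (S.Knorm w : ℂ)) := by
    unfold inn
    rw [← integral_div]
    apply integral_congr_ae
    filter_upwards with u
    rw [S.k_def, S.k_def, map_div₀, Complex.conj_ofReal, div_mul_div_comm]
  rw [hkk, S.krepro hz hw] at h
  have hφ : S.φ z w ∈ S.Ω := S.φ_mapsTo z hz hw
  have h1 : 0 < S.Knorm z := S.Knorm_pos z hz
  have h2 : 0 < S.Knorm w := S.Knorm_pos w hw
  have h3 : 0 < S.Knorm (S.φ z w) := S.Knorm_pos _ hφ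
  rw [norm_div, norm_mul, Complex.norm_real, Complex.norm_real,
    Real.norm_of_nonneg h1.le, Real.norm_of_nonneg h2.le] at h
  field_simp at h
  rw [mul_comm]
  exact h

lemma k_ne_zero (hS : S.IsStrong) {z w : Cn n} (hz : z ∈ S.Ω) (hw : w ∈ S.Ω) :
    S.K z w ≠ 0 := by
  intro h0
  have := S.a5eq hS hz hw
  rw [h0] at this
  simp at this
  have h1 : 0 < S.Knorm z := S.Knorm_pos z hz
  have h2 : 0 < S.Knorm w := S.Knorm_pos w hw
  rcases this with h | h <;> nlinarith

end BergmanTypeSpace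


namespace BergmanTypeSpace

variable {n : ℕ} (S : BergmanTypeSpace n)

lemma inn_eq_inner {f g : Cn n → ℂ} (hf : MemLp f 2 S.σ) (hg : MemLp g 2 S.σ) :
    S.inn f g = @inner ℂ _ _ (hg.toLp g) (hf.toLp f) := by
  rw [MeasureTheory.L2.inner_def]
  unfold inn
  apply integral_congr_ae
  filter_upwards [hf.coeFn_toLp, hg.coeFn_toLp] with w h1 h2
  rw [h1, h2, RCLike.inner_apply, mul_comm]

lemma norm_K_le (hS : S.IsStrong) {z x : Cn n} (hz : z ∈ S.Ω) (hx : x ∈ S.Ω) :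
    ‖S.K z x‖ ≤ S.Knorm z * S.Knorm x := by
  rw [← S.krepro hz hx, S.inn_eq_inner (S.K_memL2 z hz) (S.K_memL2 x hx)]
  calc ‖_‖ ≤ _ := norm_inner_le_norm _ _
    _ = S.Knorm x * S.Knorm z := by rw [S.norm_toLp_K hx, S.norm_toLp_K hz]
    _ = S.Knorm z * S.Knorm x := mul_comm _ _

lemma knorm_ge (hS : S.IsStrong) {z x : Cn n} (hz : z ∈ S.Ω) (hx : x ∈ S.Ω) :
    ‖S.K z x‖ / S.Knorm z ≤ S.Knorm x := by
  rw [div_le_iff₀ (S.Knorm_pos z hz)]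
  calc ‖S.K z x‖ ≤ S.Knorm z * S.Knorm x := S.norm_K_le hS hz hx
    _ = S.Knorm x * S.Knorm z := mul_comm _ _

/-- The identity `‖K_y‖ · ‖K_a(φ_a y)‖ = ‖K_a‖ · ‖K_{φ_a y}‖`. -/
lemma knorm_transfer (hS : S.IsStrong) {a y : Cn n} (ha : a ∈ S.Ω) (hy : y ∈ S.Ω) :
    S.Knorm y * ‖S.K a (S.φ a y)‖ = S.Knorm a * S.Knorm (S.φ a y) := by
  have hφy : S.φ a y ∈ S.Ω := S.φ_mapsTo a ha hy
  have := S.a5eq hS ha hφy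
  rwa [S.φ_invol a ha y hy] at this

/-- Baire category: `Knorm` is bounded on a nonempty open subset of `Ω`. -/
lemma knorm_bdd_somewhere (hS : S.IsStrong) :
    ∃ U : Set (Cn n), IsOpen U ∧ (U ∩ S.Ω).Nonempty ∧
      ∃ M : ℝ, ∀ y ∈ U ∩ S.Ω, S.Knorm y ≤ M := by
  haveI : Nonempty ↥S.Ω := ⟨⟨0, S.zero_mem⟩⟩
  haveI : LocallyCompactSpace ↥S.Ω := S.isOpen_domain.locallyCompactSpace
  set C : ℕ → Set ↥S.Ω := fun M => {y : ↥S.Ω | S.Knorm y.1 ≤ M} with hC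
  have hclosed : ∀ M : ℕ, IsClosed (C M) := by
    intro M
    rw [← isOpen_compl_iff]
    rw [isOpen_iff_forall_mem_open]
    rintro ⟨y₀, hy₀⟩ hy₀M
    simp only [mem_compl_iff, hC, mem_setOf_eq, not_le] at hy₀M
    refine ⟨{y : ↥S.Ω | (M : ℝ) < ‖S.K y₀ y.1‖ / S.Knorm y₀}, ?_, ?_, ?_⟩
    · rintro ⟨y, hy⟩ hlt
      simp only [mem_compl_iff, hC, mem_setOf_eq, not_le]
      exact lt_of_lt_of_le hlt (S.knorm_ge hS hy₀ hy)
    · apply isOpen_lt continuous_const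
      apply Continuous.div_const
      apply Continuous.norm
      have hcont : ContinuousOn (S.K y₀) S.Ω := (S.K_holo y₀ hy₀).continuousOn
      exact (hcont.restrict).congr (fun y => rfl)
    · simp only [mem_setOf_eq]
      have : ‖S.K y₀ y₀‖ = S.Knorm y₀ ^ 2 := by
        rw [S.kzz hy₀]
        rw [Complex.norm_real, Real.norm_of_nonneg (by positivity)]
      rw [this, pow_two, mul_div_assoc, div_self (S.Knorm_pos y₀ hy₀).ne', mul_one]
      exact hy₀M
  have hcover : (⋃ M : ℕ, C M) = univ := by
    rw [eq_univ_iff_forall]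
    intro y
    obtain ⟨M, hM⟩ := exists_nat_ge (S.Knorm y.1)
    exact mem_iUnion.mpr ⟨M, hM⟩
  obtain ⟨M₀, hM₀⟩ := nonempty_interior_of_iUnion_of_closed hclosed hcover
  obtain ⟨y₀, hy₀⟩ := hM₀
  have hopen : IsOpen (interior (C M₀)) := isOpen_interior
  rw [isOpen_induced_iff] at hopen
  obtain ⟨U, hUopen, hUeq⟩ := hopen
  refine ⟨U, hUopen, ⟨y₀.1, ?_, y₀.2⟩, M₀, ?_⟩
  · have : y₀ ∈ (Subtype.val ⁻¹' U : Set ↥S.Ω) := hUeq ▸ hy₀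
    exact this
  · intro y hy
    have : (⟨y, hy.2⟩ : ↥S.Ω) ∈ (Subtype.val ⁻¹' U : Set ↥S.Ω) := hy.1
    rw [hUeq] at this
    have h3 : (⟨y, hy.2⟩ : ↥S.Ω) ∈ C M₀ := interior_subset this
    exact h3

/-- Transfer of local boundedness of `Knorm` through the involutions. -/
lemma knorm_step (hS : S.IsStrong) {a c : Cn n} (ha : a ∈ S.Ω) (hc : c ∈ S.Ω)
    {V : Set (Cn n)} (hV : IsOpen V) (hmem : S.φ a c ∈ V)
    {M : ℝ} (hMbd : ∀ y ∈ V ∩ S.Ω, S.Knorm y ≤ M) :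
    ∃ ε > 0, ∃ M' : ℝ, ∀ y ∈ Metric.ball c ε ∩ S.Ω, S.Knorm y ≤ M' := by
  have hφc : S.φ a c ∈ S.Ω := S.φ_mapsTo a ha hc
  have hKne : S.K a (S.φ a c) ≠ 0 := S.k_ne_zero hS ha hφc
  set δ₀ : ℝ := ‖S.K a (S.φ a c)‖ / 2 with hδ₀
  have hKpos : 0 < ‖S.K a (S.φ a c)‖ := norm_pos_iff.mpr hKne
  have hδ₀pos : 0 < δ₀ := by rw [hδ₀]; linarith
  -- continuity of `y ↦ φ a y` at `c` and of `K a` at `φ a c`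
  have hφcont : ContinuousAt (S.φ a) c :=
    ((S.φ_holo a ha).continuousOn.continuousAt (S.isOpen_domain.mem_nhds hc))
  have hKcont : ContinuousAt (S.K a) (S.φ a c) :=
    ((S.K_holo a ha).continuousOn.continuousAt (S.isOpen_domain.mem_nhds hφc))
  have hev : ∀ᶠ y in 𝓝 c, S.φ a y ∈ V ∧ δ₀ < ‖S.K a (S.φ a y)‖ := by
    have h1 : ∀ᶠ y in 𝓝 c, S.φ a y ∈ V := hφcont (hV.mem_nhds hmem)
    have h2 : ∀ᶠ x in 𝓝 (S.φ a c), δ₀ < ‖S.K a x‖ := by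
      apply (hKcont.norm).eventually
      apply eventually_gt_nhds
      rw [hδ₀]; linarith
    exact h1.and (hφcont h2)
  obtain ⟨ε, hεpos, hε⟩ := Metric.eventually_nhds_iff.mp hev
  refine ⟨ε, hεpos, S.Knorm a * M / δ₀, ?_⟩
  rintro y ⟨hyball, hyΩ⟩
  obtain ⟨hyV, hyδ⟩ := hε (by simpa [Metric.mem_ball] using hyball)
  have hφy : S.φ a y ∈ S.Ω := S.φ_mapsTo a ha hyΩ
  have hid := S.knorm_transfer hS ha hyΩ
  have hKnφ : S.Knorm (S.φ a y) ≤ M := hMbd _ ⟨hyV, hφy⟩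
  have hpos : 0 < ‖S.K a (S.φ a y)‖ := lt_trans hδ₀pos hyδ
  have hKa : 0 < S.Knorm a := S.Knorm_pos a ha
  have hM0 : 0 ≤ M := le_trans (S.Knorm_pos _ hφy).le hKnφ
  have heq : S.Knorm y = S.Knorm a * S.Knorm (S.φ a y) / ‖S.K a (S.φ a y)‖ := by
    rw [eq_div_iff hpos.ne']
    exact hid
  rw [heq]
  apply div_le_div₀ (mul_nonneg hKa.le hM0) ?_ hδ₀pos hyδ.le
  nlinarith

end BergmanTypeSpace


namespace BergmanTypeSpace

variable {n : ℕ} (S : BergmanTypeSpace n)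

lemma knorm_locBdd (hS : S.IsStrong) {x₀ : Cn n} (hx₀ : x₀ ∈ S.Ω) :
    ∃ ε > 0, ∃ M : ℝ, ∀ y ∈ Metric.ball x₀ ε ∩ S.Ω, S.Knorm y ≤ M := by
  obtain ⟨U, hUopen, ⟨u₀, hu₀U, hu₀Ω⟩, M, hM⟩ := S.knorm_bdd_somewhere hS
  have h0 : S.φ u₀ 0 ∈ U := by rw [S.φ_zero u₀ hu₀Ω]; exact hu₀U
  obtain ⟨ε₀, hε₀, M₀, hM₀⟩ := S.knorm_step hS hu₀Ω S.zero_mem hUopen h0 hM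
  have hφx₀ : S.φ x₀ x₀ = 0 := by
    have h := S.φ_invol x₀ hx₀ 0 S.zero_mem
    rwa [S.φ_zero x₀ hx₀] at h
  have hx0 : S.φ x₀ x₀ ∈ Metric.ball (0 : Cn n) ε₀ := by
    rw [hφx₀]; exact Metric.mem_ball_self hε₀
  exact S.knorm_step hS hx₀ hx₀ Metric.isOpen_ball hx0 hM₀

/-- The kernel functions as elements of `L²(σ)`. -/
def kerLp {x : Cn n} (hx : x ∈ S.Ω) : Lp ℂ 2 S.σ := (S.K_memL2 x hx).toLp (S.K x)

/-- The set of kernel elements in `L²(σ)`. -/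
def kerSet : Set (Lp ℂ 2 S.σ) := {γ | ∃ x, ∃ hx : x ∈ S.Ω, γ = S.kerLp hx}

/-- The closure of the span of the kernel elements. -/
def Vsub : Submodule ℂ (Lp ℂ 2 S.σ) := (Submodule.span ℂ S.kerSet).topologicalClosure

lemma kerLp_mem_Vsub {x : Cn n} (hx : x ∈ S.Ω) : S.kerLp hx ∈ S.Vsub :=
  Submodule.le_topologicalClosure _ (Submodule.subset_span ⟨x, hx, rfl⟩)

lemma norm_kerLp {x : Cn n} (hx : x ∈ S.Ω) : ‖S.kerLp hx‖ = S.Knorm x :=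
  S.norm_toLp_K hx

lemma inner_kerLp_kerLp {x y : Cn n} (hx : x ∈ S.Ω) (hy : y ∈ S.Ω) :
    (inner ℂ (S.kerLp hx) (S.kerLp hy) : ℂ) = S.K y x := by
  rw [← S.krepro hy hx, S.inn_eq_inner (S.K_memL2 y hy) (S.K_memL2 x hx)]
  rfl

/-- Every element of the span of the kernels is represented by a holomorphic function. -/
lemma span_repr {γ : Lp ℂ 2 S.σ} (hγ : γ ∈ Submodule.span ℂ S.kerSet) :
    ∃ ψ : Cn n → ℂ, DifferentiableOn ℂ ψ S.Ω ∧ ∃ hψ : MemLp ψ 2 S.σ,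
      hψ.toLp ψ = γ ∧ ∀ x, ∀ hx : x ∈ S.Ω, (inner ℂ (S.kerLp hx) γ : ℂ) = ψ x := by
  induction hγ using Submodule.span_induction with
  | mem γ hγm =>
    obtain ⟨y, hy, rfl⟩ := hγm
    refine ⟨S.K y, S.K_holo y hy, S.K_memL2 y hy, rfl, fun x hx => ?_⟩
    exact S.inner_kerLp_kerLp hx hy
  | zero =>
    refine ⟨0, differentiableOn_const 0, MemLp.zero, ?_, fun x hx => ?_⟩
    · exact MemLp.toLp_zero _
    · simp
  | add γ₁ γ₂ h₁ h₂ ih₁ ih₂ =>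
    obtain ⟨ψ₁, hd₁, hm₁, ht₁, hi₁⟩ := ih₁
    obtain ⟨ψ₂, hd₂, hm₂, ht₂, hi₂⟩ := ih₂
    refine ⟨ψ₁ + ψ₂, hd₁.add hd₂, hm₁.add hm₂, ?_, fun x hx => ?_⟩
    · rw [MemLp.toLp_add hm₁ hm₂, ht₁, ht₂]
    · rw [inner_add_right, hi₁ x hx, hi₂ x hx]; rfl
  | smul a γ₁ h₁ ih =>
    obtain ⟨ψ, hd, hm, ht, hi⟩ := ih
    refine ⟨a • ψ, hd.const_smul a, hm.const_smul a, ?_, fun x hx => ?_⟩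
    · rw [MemLp.toLp_const_smul a hm, ht]
    · rw [inner_smul_right, hi x hx]; rfl

open scoped Classical in
/-- The canonical pointwise representative of an element of `Vsub`. -/
def evalV (γ : Lp ℂ 2 S.σ) : Cn n → ℂ :=
  fun x => if hx : x ∈ S.Ω then (inner ℂ (S.kerLp hx) γ : ℂ) else 0

lemma evalV_approx {γ : Lp ℂ 2 S.σ} (hγ : γ ∈ S.Vsub) :
    ∃ ψ : ℕ → Cn n → ℂ, ∃ hψd : ∀ m, DifferentiableOn ℂ (ψ m) S.Ω,
    ∃ hψ : ∀ m, MemLp (ψ m) 2 S.σ,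
      (∀ m, ‖(hψ m).toLp (ψ m) - γ‖ ≤ 1/(m+1)) ∧
      (∀ m x, ∀ hx : x ∈ S.Ω, ‖S.evalV γ x - ψ m x‖ ≤ S.Knorm x * (1/(m+1))) := by
  have hcl : γ ∈ closure (Submodule.span ℂ S.kerSet : Set (Lp ℂ 2 S.σ)) := hγ
  have hex : ∀ m : ℕ, ∃ b ∈ (Submodule.span ℂ S.kerSet : Set (Lp ℂ 2 S.σ)),
      dist γ b < 1/(m+1) := by
    intro m
    exact Metric.mem_closure_iff.mp hcl _ (by positivity)
  choose b hbmem hbdist using hex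
  have hrepr := fun m => S.span_repr (hbmem m)
  choose ψ hψd hψ ht hi using hrepr
  refine ⟨ψ, hψd, hψ, fun m => ?_, fun m x hx => ?_⟩
  · rw [ht m]
    rw [← dist_eq_norm]
    exact (dist_comm γ (b m) ▸ (hbdist m)).le
  · have h1 : S.evalV γ x - ψ m x = (inner ℂ (S.kerLp hx) (γ - b m) : ℂ) := by
      rw [inner_sub_right]
      unfold evalV
      rw [dif_pos hx, hi m x hx]
    rw [h1]
    calc ‖(inner ℂ (S.kerLp hx) (γ - b m) : ℂ)‖ ≤ ‖S.kerLp hx‖ * ‖γ - b m‖ :=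
          norm_inner_le_norm _ _
      _ ≤ S.Knorm x * (1/(m+1)) := by
          rw [S.norm_kerLp hx]
          apply mul_le_mul_of_nonneg_left _ (S.Knorm_pos x hx).le
          rw [← dist_eq_norm]
          exact (hbdist m).le

lemma evalV_ae {γ : Lp ℂ 2 S.σ} (hγ : γ ∈ S.Vsub) :
    S.evalV γ =ᵐ[S.σ] (γ : Cn n → ℂ) := by
  obtain ⟨ψ, hψd, hψ, hnorm, happ⟩ := S.evalV_approx hγ
  -- `toLp (ψ m) → γ` in `L²`, so a subsequence converges a.e.
  have help : Tendsto (fun m => eLpNorm (ψ m - (γ : Cn n → ℂ)) 2 S.σ) atTop (𝓝 0) := by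
    have hfin : ∀ m, eLpNorm (ψ m - (γ : Cn n → ℂ)) 2 S.σ
        ≤ ENNReal.ofReal (1/(m+1)) := by
      intro m
      have h1 : eLpNorm (ψ m - (γ : Cn n → ℂ)) 2 S.σ
          = ENNReal.ofReal ‖(hψ m).toLp (ψ m) - γ‖ := by
        rw [Lp.norm_def, ENNReal.ofReal_toReal ((Lp.memLp _).2).ne]
        apply eLpNorm_congr_ae
        filter_upwards [Lp.coeFn_sub ((hψ m).toLp (ψ m)) γ, (hψ m).coeFn_toLp] with w hw1 hw2
        simp only [Pi.sub_apply] at hw1 ⊢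
        rw [hw1, hw2]
      rw [h1]
      exact ENNReal.ofReal_le_ofReal (hnorm m)
    apply tendsto_of_tendsto_of_tendsto_of_le_of_le tendsto_const_nhds ?_
      (fun m => zero_le) hfin
    rw [← ENNReal.ofReal_zero]
    exact ENNReal.tendsto_ofReal tendsto_one_div_add_atTop_nhds_zero_nat
  have hmeas : TendstoInMeasure S.σ (fun m => ψ m) atTop (γ : Cn n → ℂ) :=
    tendstoInMeasure_of_tendsto_eLpNorm two_ne_zero (fun m => (hψ m).1)
      (Lp.aestronglyMeasurable γ) help
  obtain ⟨ms, hms, hae⟩ := hmeas.exists_seq_tendsto_ae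
  filter_upwards [hae, S.ae_mem_Ω] with w hw hwΩ
  -- pointwise convergence to `evalV γ w`
  have h2 : Tendsto (fun t => ψ (ms t) w) atTop (𝓝 (S.evalV γ w)) := by
    rw [tendsto_iff_dist_tendsto_zero]
    apply squeeze_zero (fun t => dist_nonneg) (fun t => ?_)
      (g := fun t => S.Knorm w * (1/(ms t + 1)))
    · have : Tendsto (fun t => (1:ℝ)/(ms t + 1)) atTop (𝓝 0) := by
        apply Tendsto.comp tendsto_one_div_add_atTop_nhds_zero_nat hms.tendsto_atTop
      simpa using this.const_mul (S.Knorm w)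
    · rw [dist_eq_norm, ← norm_neg]
      simpa using happ (ms t) w hwΩ
  exact tendsto_nhds_unique h2 hw

end BergmanTypeSpace


namespace BergmanTypeSpace

variable {n : ℕ} (S : BergmanTypeSpace n)

lemma evalV_memLp {γ : Lp ℂ 2 S.σ} (hγ : γ ∈ S.Vsub) : MemLp (S.evalV γ) 2 S.σ :=
  (Lp.memLp γ).ae_eq (S.evalV_ae hγ).symm

lemma evalV_diffOn (hS : S.IsStrong) {γ : Lp ℂ 2 S.σ} (hγ : γ ∈ S.Vsub) :
    DifferentiableOn ℂ (S.evalV γ) S.Ω := by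
  obtain ⟨ψ, hψd, hψ, hnorm, happ⟩ := S.evalV_approx hγ
  apply aux_diffOn_of_approx S.isOpen_domain ψ hψd
  intro x₀ hx₀
  obtain ⟨ε, hε, M, hM⟩ := S.knorm_locBdd hS hx₀
  obtain ⟨r', hr', hr'sub⟩ := Metric.isOpen_iff.mp S.isOpen_domain x₀ hx₀
  set r := min (ε/2) (r'/2) with hrdef
  have hr : 0 < r := lt_min (by linarith) (by linarith)
  have hsub : Metric.closedBall x₀ r ⊆ Metric.ball x₀ ε ∩ S.Ω := by
    intro y hy
    have hy' : dist y x₀ ≤ r := Metric.mem_closedBall.mp hy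
    have h1 : r ≤ ε/2 := min_le_left _ _
    have h2 : r ≤ r'/2 := min_le_right _ _
    constructor
    · exact Metric.mem_ball.mpr (by linarith)
    · exact hr'sub (Metric.mem_ball.mpr (by linarith))
  have hM0 : 0 ≤ M :=
    le_trans (S.Knorm_pos x₀ hx₀).le (hM x₀ ⟨Metric.mem_ball_self hε, hx₀⟩)
  refine ⟨r, hr, fun y hy => (hsub hy).2, fun m => M * (1/(m+1)), ?_, ?_⟩
  · simpa using (tendsto_one_div_add_atTop_nhds_zero_nat).const_mul M
  · intro m y hy
    have hyΩ : y ∈ S.Ω := (hsub hy).2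
    calc ‖S.evalV γ y - ψ m y‖ ≤ S.Knorm y * (1/(m+1)) := happ m y hyΩ
      _ ≤ M * (1/(m+1)) := by
          apply mul_le_mul_of_nonneg_right (hM y (hsub hy)) (by positivity)

lemma toeplitz_eq_inner {g f : Cn n → ℂ} (hgf : MemLp (fun w => g w * f w) 2 S.σ)
    {x : Cn n} (hx : x ∈ S.Ω) :
    S.toeplitz g f x = (inner ℂ (S.kerLp hx) (hgf.toLp _) : ℂ) := by
  rw [MeasureTheory.L2.inner_def]
  show (∫ w, S.inn (S.K w) (S.K x) * (g w * f w) ∂S.σ) = _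
  apply integral_congr_ae
  filter_upwards [S.ae_mem_Ω, hgf.coeFn_toLp, (S.K_memL2 x hx).coeFn_toLp]
    with w hwΩ h1 h2
  have h3 : (S.kerLp hx : Cn n → ℂ) w = S.K x w := h2
  rw [RCLike.inner_apply, h1, h3, S.krepro hwΩ hx, S.kconj hwΩ hx, mul_comm]

lemma symbol_aemeasurable {ufun : Cn n → ℂ} (humeas : Measurable ufun) {a : Cn n}
    (ha : a ∈ S.Ω) : AEMeasurable (fun w => ufun (S.φ a w)) S.σ := by
  have hres : S.σ.restrict S.Ω = S.σ := Measure.restrict_eq_self_of_ae_mem S.ae_mem_Ω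
  rw [← hres]
  exact humeas.comp_aemeasurable
    ((S.φ_holo a ha).continuousOn.aemeasurable S.isOpen_domain.measurableSet)

lemma mul_memLp {g : Cn n → ℂ} (hg : AEStronglyMeasurable g S.σ) {Mg : ℝ}
    (hbd : ∀ᵐ w ∂S.σ, ‖g w‖ ≤ Mg) {f : Cn n → ℂ} (hf : MemLp f 2 S.σ) :
    MemLp (fun w => g w * f w) 2 S.σ := by
  apply MemLp.of_le_mul hf (hg.mul hf.1)
  filter_upwards [hbd] with w hw
  simp only [Pi.mul_apply, norm_mul]
  exact mul_le_mul_of_nonneg_right hw (norm_nonneg _)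

lemma lintegral_sq_lt_top {f : Cn n → ℂ} (hf : MemLp f 2 S.σ) :
    ∫⁻ w, (‖f w‖₊ : ℝ≥0∞)^2 ∂S.σ ≠ ⊤ := by
  have h2 : (∫⁻ w, (‖f w‖₊ : ℝ≥0∞)^2 ∂S.σ) ^ ((1:ℝ)/2) < ⊤ := by
    rw [← aux_eLpNorm_two]
    exact hf.2
  exact ((ENNReal.rpow_lt_top_iff_of_pos (by norm_num)).mp h2).ne

lemma nrm_congr_ae {f g : Cn n → ℂ} (h : f =ᵐ[S.σ] g) : S.nrm f = S.nrm g := by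
  unfold nrm
  congr 1
  apply integral_congr_ae
  filter_upwards [h] with w hw
  rw [hw]

lemma nrm_coe (γ : Lp ℂ 2 S.σ) : S.nrm (γ : Cn n → ℂ) = ‖γ‖ := by
  rw [S.nrm_eq_norm_toLp (Lp.memLp γ)]
  congr 1
  exact Lp.toLp_coeFn γ _

end BergmanTypeSpace


namespace BergmanTypeSpace

variable {n : ℕ} (S : BergmanTypeSpace n)

lemma main_perf (hS : S.IsStrong) {u : Cn n → ℂ} (hu : S.IsBUCSymbol u)
    {z : ℕ → Cn n} (hz : ∀ m, z m ∈ S.Ω) {nk : ℕ → ℕ}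
    {v : Cn n → ℂ} {Mu : ℝ} (hMu0 : 0 ≤ Mu)
    (hMu : ∀ w ∈ S.Ω, ‖u w‖ ≤ Mu)
    (hv : ∀ w ∈ S.Ω, Tendsto (fun k => u (S.φ (z (nk k)) w)) atTop (𝓝 (v w)))
    {f : Cn n → ℂ} (hf : S.memB f) :
    ∃ β, S.memB β ∧ ∀ ε > 0, ∃ N, ∀ k ≥ N,
      S.nrm (fun x => S.toeplitz (fun w => u (S.φ (z (nk k)) w)) f x - β x) < ε := by
  have hfm : MemLp f 2 S.σ := hf.2
  -- the translated symbols multiplied by f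
  have hsymb : ∀ j : ℕ, ∀ᵐ w ∂S.σ, ‖u (S.φ (z j) w)‖ ≤ Mu := by
    intro j
    filter_upwards [S.ae_mem_Ω] with w hw
    exact hMu _ (S.φ_mapsTo (z j) (hz j) hw)
  have hk : ∀ k : ℕ, MemLp (fun w => u (S.φ (z (nk k)) w) * f w) 2 S.σ := fun k =>
    S.mul_memLp ((S.symbol_aemeasurable hu.1.1 (hz (nk k))).aestronglyMeasurable)
      (hsymb (nk k)) hfm
  -- the limit symbol
  have hvb : ∀ᵐ w ∂S.σ, ‖v w‖ ≤ Mu := by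
    filter_upwards [S.ae_mem_Ω] with w hw
    apply le_of_tendsto (hv w hw).norm
    filter_upwards with k
    exact hMu _ (S.φ_mapsTo (z (nk k)) (hz (nk k)) hw)
  have hvmeas : AEMeasurable v S.σ := by
    apply aemeasurable_of_tendsto_metrizable_ae atTop
      (f := fun k w => u (S.φ (z (nk k)) w))
      (fun k => S.symbol_aemeasurable hu.1.1 (hz (nk k)))
    filter_upwards [S.ae_mem_Ω] with w hw
    exact hv w hw
  have hvf : MemLp (fun w => v w * f w) 2 S.σ :=
    S.mul_memLp hvmeas.aestronglyMeasurable hvb hfm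
  -- `L²` convergence of the products, by dominated convergence
  have hL : Tendsto (fun k => ∫⁻ w,
      (‖(u (S.φ (z (nk k)) w) * f w) - v w * f w‖₊ : ℝ≥0∞)^2 ∂S.σ) atTop (𝓝 0) := by
    have h0 : (0 : ℝ≥0∞) = ∫⁻ _, 0 ∂S.σ := by simp
    rw [h0]
    apply tendsto_lintegral_of_dominated_convergence'
      (bound := fun w => (ENNReal.ofReal (2*Mu) * (‖f w‖₊ : ℝ≥0∞))^2)
    · intro k
      exact (((hk k).sub hvf).1.enorm).pow_const 2
    · intro k
      filter_upwards [hsymb (nk k), hvb] with w h1 h2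
      apply pow_le_pow_left₀ zero_le
      rw [← enorm_eq_nnnorm, ← enorm_eq_nnnorm, ← ofReal_norm, ← ofReal_norm,
        ← ENNReal.ofReal_mul (by linarith)]
      apply ENNReal.ofReal_le_ofReal
      calc ‖(u (S.φ (z (nk k)) w) * f w) - v w * f w‖
          = ‖(u (S.φ (z (nk k)) w) - v w) * f w‖ := by ring_nf
        _ = ‖u (S.φ (z (nk k)) w) - v w‖ * ‖f w‖ := norm_mul _ _
        _ ≤ (2*Mu) * ‖f w‖ := by
            apply mul_le_mul_of_nonneg_right _ (norm_nonneg _)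
            calc ‖u (S.φ (z (nk k)) w) - v w‖ ≤ ‖u (S.φ (z (nk k)) w)‖ + ‖v w‖ :=
                  norm_sub_le _ _
              _ ≤ 2*Mu := by linarith
    · have heq : ∀ w, (ENNReal.ofReal (2*Mu) * (‖f w‖₊ : ℝ≥0∞))^2
          = (ENNReal.ofReal (2*Mu))^2 * ((‖f w‖₊ : ℝ≥0∞))^2 := fun w => mul_pow _ _ 2
      rw [lintegral_congr heq,
        lintegral_const_mul' _ _ (ENNReal.pow_ne_top ENNReal.ofReal_ne_top)]
      exact ENNReal.mul_ne_top (ENNReal.pow_ne_top ENNReal.ofReal_ne_top)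
        (S.lintegral_sq_lt_top hfm)
    · filter_upwards [S.ae_mem_Ω] with w hw
      have h1 : Tendsto (fun k => (u (S.φ (z (nk k)) w) * f w) - v w * f w) atTop (𝓝 0) := by
        have := ((hv w hw).mul_const (f w)).sub_const (v w * f w)
        simpa using this
      have hcont : Continuous (fun ζ : ℂ => ((‖ζ‖₊^2 : NNReal) : ℝ≥0∞)) :=
        ENNReal.continuous_coe.comp (continuous_nnnorm.pow 2)
      have h2 := (hcont.tendsto 0).comp h1
      simpa [ENNReal.coe_pow, Function.comp_def] using h2
  have hLp : Tendsto (fun k => ‖(hk k).toLp _ - hvf.toLp _‖) atTop (𝓝 0) := by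
    have heq : ∀ k : ℕ, ‖(hk k).toLp _ - hvf.toLp _‖
        = (eLpNorm (fun w => (u (S.φ (z (nk k)) w) * f w) - v w * f w) 2 S.σ).toReal := by
      intro k
      rw [Lp.norm_def]
      congr 1
      apply eLpNorm_congr_ae
      filter_upwards [Lp.coeFn_sub ((hk k).toLp _) (hvf.toLp _),
        (hk k).coeFn_toLp, hvf.coeFn_toLp] with w h1 h2 h3
      rw [h1, Pi.sub_apply, h2, h3]
    simp only [heq]
    have h2 : Tendsto (fun k =>
        eLpNorm (fun w => (u (S.φ (z (nk k)) w) * f w) - v w * f w) 2 S.σ) atTop (𝓝 0) := by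
      have heq2 : ∀ k : ℕ, eLpNorm (fun w => (u (S.φ (z (nk k)) w) * f w) - v w * f w) 2 S.σ
          = (∫⁻ w, (‖(u (S.φ (z (nk k)) w) * f w) - v w * f w‖₊ : ℝ≥0∞)^2 ∂S.σ) ^ ((1:ℝ)/2) :=
        fun k => aux_eLpNorm_two _ _
      simp only [heq2]
      have hcont := (ENNReal.continuous_rpow_const (y := (1:ℝ)/2)).tendsto 0
      have := hcont.comp hL
      simpa [ENNReal.zero_rpow_of_pos, Function.comp_def] using this
    have h3 := (ENNReal.tendsto_toReal (a := 0) (by simp)).comp h2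
    simpa [Function.comp_def] using h3
  -- the orthogonal projection onto the closed span of the kernels
  haveI : CompleteSpace S.Vsub := (Submodule.isClosed_topologicalClosure _).completeSpace_coe
  set Pr := Submodule.orthogonalProjection S.Vsub with hPr
  set p := Pr (hvf.toLp _) with hp
  refine ⟨S.evalV ↑p, ⟨S.evalV_diffOn hS (SetLike.coe_mem p), S.evalV_memLp (SetLike.coe_mem p)⟩, ?_⟩
  intro ε hε
  obtain ⟨N, hN⟩ := (Metric.tendsto_atTop.mp hLp) ε hε
  refine ⟨N, fun k hk' => ?_⟩
  have hdist : ‖(hk k).toLp _ - hvf.toLp _‖ < ε := by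
    have := hN k hk'
    rwa [Real.dist_eq, sub_zero, abs_of_nonneg (norm_nonneg _)] at this
  -- identify the difference with an element of `Vsub`
  set δ : Lp ℂ 2 S.σ := ↑(Pr ((hk k).toLp _)) - ↑p with hδ
  have hδV : δ ∈ S.Vsub := Submodule.sub_mem _ (SetLike.coe_mem _) (SetLike.coe_mem _)
  have hae1 : (fun x => S.toeplitz (fun w => u (S.φ (z (nk k)) w)) f x - S.evalV ↑p x)
      =ᵐ[S.σ] S.evalV δ := by
    filter_upwards [S.ae_mem_Ω] with x hx
    have horth : (inner ℂ (S.kerLp hx) ((hk k).toLp _ - ↑(Pr ((hk k).toLp _))) : ℂ) = 0 :=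
      Submodule.inner_right_of_mem_orthogonal (S.kerLp_mem_Vsub hx)
        (Submodule.sub_starProjection_mem_orthogonal _)
    rw [inner_sub_right] at horth
    have hTk : S.toeplitz (fun w => u (S.φ (z (nk k)) w)) f x
        = (inner ℂ (S.kerLp hx) ((hk k).toLp _) : ℂ) := S.toeplitz_eq_inner (hk k) hx
    have hβ : S.evalV (↑p) x = (inner ℂ (S.kerLp hx) (↑p : Lp ℂ 2 S.σ) : ℂ) := dif_pos hx
    have hδx : S.evalV δ x = (inner ℂ (S.kerLp hx) δ : ℂ) := dif_pos hx
    rw [hTk, hβ, hδx, hδ, inner_sub_right, sub_eq_zero.mp horth]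
  have hnrm : S.nrm (fun x => S.toeplitz (fun w => u (S.φ (z (nk k)) w)) f x - S.evalV ↑p x)
      = ‖δ‖ := by
    rw [S.nrm_congr_ae (hae1.trans (S.evalV_ae hδV)), S.nrm_coe]
  rw [hnrm]
  have hproj : δ = ↑(Pr ((hk k).toLp _) - p) := by rw [Submodule.coe_sub]
  have hbound : ‖δ‖ ≤ ‖(hk k).toLp _ - hvf.toLp _‖ := by
    rw [hproj, hp, ← map_sub]
    calc ‖(Pr ((hk k).toLp _ - hvf.toLp _) : Lp ℂ 2 S.σ)‖
        = ‖Pr ((hk k).toLp _ - hvf.toLp _)‖ := rfl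
      _ ≤ ‖Pr‖ * ‖(hk k).toLp _ - hvf.toLp _‖ := Pr.le_opNorm _
      _ ≤ 1 * ‖(hk k).toLp _ - hvf.toLp _‖ := by
          apply mul_le_mul_of_nonneg_right (Submodule.orthogonalProjection_norm_le _) (norm_nonneg _)
      _ = ‖(hk k).toLp _ - hvf.toLp _‖ := one_mul _
  exact lt_of_le_of_lt hbound hdist

end BergmanTypeSpace


namespace BergmanTypeSpace

variable {n : ℕ} (S : BergmanTypeSpace n)

lemma symbols_subseq (hS : S.IsStrong) {u : Cn n → ℂ} (hu : S.IsBUCSymbol u)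
    {z : ℕ → Cn n} (hz : ∀ m, z m ∈ S.Ω) {Mu : ℝ} (hMu : ∀ w ∈ S.Ω, ‖u w‖ ≤ Mu) :
    ∃ nk : ℕ → ℕ, StrictMono nk ∧ ∃ v : Cn n → ℂ,
      ∀ w ∈ S.Ω, Tendsto (fun k => u (S.φ (z (nk k)) w)) atTop (𝓝 (v w)) := by
  classical
  obtain ⟨s, hscount, hsΩ, hsdense⟩ := S.d_separable
  have hsne : s.Nonempty := by
    obtain ⟨w, hw, _⟩ := hsdense 0 S.zero_mem 1 one_pos
    exact ⟨w, hw⟩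
  obtain ⟨q, hq⟩ := hscount.exists_eq_range hsne
  have hqΩ : ∀ i : ℕ, q i ∈ S.Ω := fun i => hsΩ (hq ▸ mem_range_self i)
  have hGmem : ∀ j : ℕ, (fun i => u (S.φ (z j) (q i))) ∈
      Set.univ.pi (fun _ : ℕ => Metric.closedBall (0:ℂ) Mu) := by
    intro j i _
    rw [Metric.mem_closedBall, dist_zero_right]
    exact hMu _ (S.φ_mapsTo (z j) (hz j) (hqΩ i))
  obtain ⟨a, -, nk, hnk, hconv⟩ := (isCompact_univ_pi
    (fun _ : ℕ => isCompact_closedBall (0:ℂ) Mu)).tendsto_subseq hGmem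
  have hpt : ∀ i : ℕ, Tendsto (fun k => u (S.φ (z (nk k)) (q i))) atTop (𝓝 (a i)) :=
    fun i => tendsto_pi_nhds.mp hconv i
  have hCauchy : ∀ w ∈ S.Ω, CauchySeq (fun k => u (S.φ (z (nk k)) w)) := by
    intro w hw
    rw [Metric.cauchySeq_iff]
    intro ε hε
    obtain ⟨δ, hδ, hδ'⟩ := hu.2 (ε/3) (by linarith)
    obtain ⟨qi, hqi_mem, hqi⟩ := hsdense w hw δ hδ
    obtain ⟨i, rfl⟩ : ∃ i, q i = qi := by
      have : qi ∈ range q := hq ▸ hqi_mem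
      exact this
    have hc : CauchySeq (fun k => u (S.φ (z (nk k)) (q i))) := (hpt i).cauchySeq
    obtain ⟨N, hN⟩ := Metric.cauchySeq_iff.mp hc (ε/3) (by linarith)
    refine ⟨N, fun k1 hk1 k2 hk2 => ?_⟩
    have key : ∀ k : ℕ, dist (u (S.φ (z (nk k)) w)) (u (S.φ (z (nk k)) (q i))) < ε/3 := by
      intro k
      rw [dist_eq_norm]
      apply hδ' _ (S.φ_mapsTo _ (hz _) hw) _ (S.φ_mapsTo _ (hz _) (hqΩ i))
      rw [hS.1 (z (nk k)) (hz _) w hw (q i) (hqΩ i)]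
      exact hqi
    have h12 := hN k1 hk1 k2 hk2
    calc dist (u (S.φ (z (nk k1)) w)) (u (S.φ (z (nk k2)) w))
        ≤ dist (u (S.φ (z (nk k1)) w)) (u (S.φ (z (nk k1)) (q i)))
          + dist (u (S.φ (z (nk k1)) (q i))) (u (S.φ (z (nk k2)) (q i)))
          + dist (u (S.φ (z (nk k2)) (q i))) (u (S.φ (z (nk k2)) w)) :=
          dist_triangle4 _ _ _ _
      _ < ε/3 + ε/3 + ε/3 := by
          have h1 := key k1
          have h2 := key k2
          rw [dist_comm (u (S.φ (z (nk k2)) (q i)))] at *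
          gcongr
      _ = ε := by ring
  set v : Cn n → ℂ := fun w =>
    if hw : w ∈ S.Ω then
      if h : ∃ c0 : ℂ, Tendsto (fun k => u (S.φ (z (nk k)) w)) atTop (𝓝 c0) then h.choose else 0
    else 0 with hv
  refine ⟨nk, hnk, v, fun w hw => ?_⟩
  have hex : ∃ c0 : ℂ, Tendsto (fun k => u (S.φ (z (nk k)) w)) atTop (𝓝 c0) :=
    cauchySeq_tendsto_of_complete (hCauchy w hw)
  simp only [hv, dif_pos hw, dif_pos hex]
  exact hex.choose_spec

end BergmanTypeSpace


/-- for `u ∈ BUC(Ω,d)` and any sequence `{z_m}` in `Ω`, the sequence of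
Toeplitz operators `T_{u∘φ_{z_m}}` has a subnet converging in the strong operator
topology; equivalently, it has a cluster point `B` in SOT. -/
theorem statement19 (n : ℕ) (S : BergmanTypeSpace n) (hS : S.IsStrong)
    (u : Cn n → ℂ) (hu : S.IsBUCSymbol u)
    (z : ℕ → Cn n) (hz : ∀ m, z m ∈ S.Ω) :
    ∃ B : (Cn n → ℂ) → (Cn n → ℂ),
      Set.MapsTo B {f | S.memB f} {f | S.memB f} ∧
      ∀ (m : ℕ) (fs : Fin m → (Cn n → ℂ)), (∀ i, S.memB (fs i)) →
        ∀ ε : ℝ, 0 < ε → ∀ N : ℕ, ∃ j ≥ N, ∀ i,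
          S.nrm (fun x =>
            S.toeplitz (fun w => u (S.φ (z j) w)) (fs i) x - B (fs i) x) < ε := by
  classical
  obtain ⟨Mu₀, hMu₀⟩ := hu.1.2
  set Mu : ℝ := max Mu₀ 0 with hMudef
  have hMu : ∀ w ∈ S.Ω, ‖u w‖ ≤ Mu := fun w hw => le_trans (hMu₀ w hw) (le_max_left _ _)
  have hMu0 : (0:ℝ) ≤ Mu := le_max_right _ _
  obtain ⟨nk, hnk, v, hv⟩ := S.symbols_subseq hS hu hz hMu
  have hmain : ∀ f : Cn n → ℂ, S.memB f →
      ∃ β, S.memB β ∧ ∀ ε > 0, ∃ N, ∀ k ≥ N,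
        S.nrm (fun x => S.toeplitz (fun w => u (S.φ (z (nk k)) w)) f x - β x) < ε :=
    fun f hf => S.main_perf hS hu hz hMu0 hMu hv hf
  refine ⟨fun f => if hf : S.memB f then (hmain f hf).choose else 0, ?_, ?_⟩
  · intro f hf
    simp only [mem_setOf_eq] at hf ⊢
    rw [dif_pos hf]
    exact ((hmain f hf).choose_spec).1
  · intro m fs hfs ε hε N
    have hspec : ∀ i : Fin m, ∃ Ni : ℕ, ∀ k ≥ Ni,
        S.nrm (fun x => S.toeplitz (fun w => u (S.φ (z (nk k)) w)) (fs i) x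
          - (if hf : S.memB (fs i) then (hmain (fs i) hf).choose else 0) x) < ε := by
      intro i
      obtain ⟨Ni, hNi⟩ := ((hmain (fs i) (hfs i)).choose_spec).2 ε hε
      refine ⟨Ni, fun k hk => ?_⟩
      rw [dif_pos (hfs i)]
      exact hNi k hk
    choose Ni hNi using hspec
    set k0 : ℕ := max N (Finset.univ.sup Ni) with hk0
    refine ⟨nk k0, le_trans (le_max_left _ _) hnk.le_apply, fun i => ?_⟩
    exact hNi i k0 (le_trans (Finset.le_sup (Finset.mem_univ i)) (le_max_right _ _))
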